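/- Let p ∈ (0,1) and let r_p : [0,1] → [0,1] be the unique continuous decreasing function satisfying x^p (1−x)^{1−p} = r_p(x)^p (1−r_p(x))^{1−p} for x ∈ (0,1). If p < 1/2 then 2p − x ≤ r_p(x) < 1 − x for all x ∈ (0,1); if p > 1/2 then 2p − x ≥ r_p(x) > 1 − x for all x ∈ (0,1); and if p = 1/2 then r_p(x) = 1 − x for all x ∈ [0,1]. -/

import Mathlib

open Real Set

noncomputable def G (p x : ℝ) : ℝ := Real.log x * p + Real.log (1 - x) * (1 - p)

lemma G_deriv (p x : ℝ) (hx : 0 < x) (hx1 : x < 1) :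
    HasDerivAt (G p) ((p - x) / (x * (1 - x))) x := by
  have h1 : HasDerivAt (fun y : ℝ => Real.log y * p) (x⁻¹ * p) x :=
    (Real.hasDerivAt_log hx.ne').mul_const p
  have h2 : HasDerivAt (fun y : ℝ => (1 : ℝ) - y) (-1) x := by
    simpa using (hasDerivAt_id x).const_sub (1:ℝ)
  have h3 : HasDerivAt (fun y : ℝ => Real.log (1 - y)) ((1 - x)⁻¹ * (-1)) x :=
    (Real.hasDerivAt_log (by linarith : (1:ℝ) - x ≠ 0)).comp x h2
  have h4 := h1.add ((h3.mul_const (1 - p)))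
  have h0 : (0:ℝ) < x * (1 - x) := by nlinarith
  have he : (p - x) / (x * (1 - x)) = x⁻¹ * p + (1 - x)⁻¹ * (-1) * (1 - p) := by
    rw [div_eq_iff h0.ne']
    field_simp [hx.ne', (show (1:ℝ) - x ≠ 0 by linarith)]
    ring
  rw [he]
  exact h4

lemma G_mono (p : ℝ) (hp : 0 < p) (hp1 : p < 1) : StrictMonoOn (G p) (Set.Ioc 0 p) := by
  have hconv : Convex ℝ (Set.Ioc (0:ℝ) p) := convex_Ioc 0 p
  apply strictMonoOn_of_deriv_pos hconv
  · apply ContinuousOn.add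
    · exact (Real.continuousOn_log.comp (continuousOn_id) (fun x hx => by
        simp; exact ne_of_gt hx.1)).mul continuousOn_const
    · exact (Real.continuousOn_log.comp (continuousOn_const.sub continuousOn_id)
        (fun x hx => by simp; intro h; nlinarith [hx.1, hx.2])).mul continuousOn_const
  · intro x hx
    rw [interior_Ioc] at hx
    rw [(G_deriv p x hx.1 (by linarith [hx.2])).deriv]
    apply div_pos (by linarith [hx.2]) (by nlinarith [hx.1, hx.2, hp1])

lemma G_anti (p : ℝ) (hp : 0 < p) (hp1 : p < 1) : StrictAntiOn (G p) (Set.Ico p 1) := by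
  have hconv : Convex ℝ (Set.Ico p (1:ℝ)) := convex_Ico p 1
  apply strictAntiOn_of_deriv_neg hconv
  · apply ContinuousOn.add
    · exact (Real.continuousOn_log.comp (continuousOn_id) (fun x hx => by
        simp; nlinarith [hx.1, hx.2])).mul continuousOn_const
    · exact (Real.continuousOn_log.comp (continuousOn_const.sub continuousOn_id)
        (fun x hx => by simp; intro h; nlinarith [hx.1, hx.2])).mul continuousOn_const
  · intro x hx
    rw [interior_Ico] at hx
    rw [(G_deriv p x (by linarith [hx.1]) hx.2).deriv]
    apply div_neg_of_neg_of_pos (by linarith [hx.1]) (by nlinarith [hx.1, hx.2, hp])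


lemma log_hasDerivAt_shift (c : ℝ) (t : ℝ) (h : c + t ≠ 0) :
    HasDerivAt (fun s : ℝ => Real.log (c + s)) ((c + t)⁻¹) t := by
  have h2 : HasDerivAt (fun s : ℝ => c + s) 1 t := by
    simpa using (hasDerivAt_id t).const_add c
  simpa [Function.comp_def] using (Real.hasDerivAt_log h).comp t h2

lemma log_hasDerivAt_shift' (c : ℝ) (t : ℝ) (h : c - t ≠ 0) :
    HasDerivAt (fun s : ℝ => Real.log (c - s)) (-(c - t)⁻¹) t := by
  have h2 : HasDerivAt (fun s : ℝ => c - s) (-1) t := by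
    simpa using (hasDerivAt_id t).const_sub c
  have := (Real.hasDerivAt_log h).comp t h2
  simpa [Function.comp_def] using this

lemma G_sym (p : ℝ) (hp : 0 < p) (hp2 : p < 1/2) {t : ℝ} (ht : 0 < t) (htp : t < p) :
    G p (p - t) < G p (p + t) := by
  set H : ℝ → ℝ := fun s => G p (p + s) - G p (p - s) with hH
  have key : StrictMonoOn H (Set.Ico 0 p) := by
    apply strictMonoOn_of_deriv_pos (convex_Ico 0 p)
    · apply ContinuousOn.sub
      · apply ContinuousOn.add
        · exact ((continuousOn_const.add continuousOn_id).log
            (fun s hs => by intro h; simp only [Pi.add_apply, Pi.sub_apply, id] at h; nlinarith [hs.1, hs.2])).mul continuousOn_const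
        · exact ((continuousOn_const.sub (continuousOn_const.add continuousOn_id)).log
            (fun s hs => by intro h; simp only [Pi.add_apply, Pi.sub_apply, id] at h; nlinarith [hs.1, hs.2])).mul continuousOn_const
      · apply ContinuousOn.add
        · exact ((continuousOn_const.sub continuousOn_id).log
            (fun s hs => by intro h; simp only [Pi.add_apply, Pi.sub_apply, id] at h; nlinarith [hs.1, hs.2])).mul continuousOn_const
        · exact ((continuousOn_const.sub (continuousOn_const.sub continuousOn_id)).log
            (fun s hs => by intro h; simp only [Pi.add_apply, Pi.sub_apply, id] at h; nlinarith [hs.1, hs.2])).mul continuousOn_const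
    · intro s hs
      rw [interior_Ico] at hs
      obtain ⟨hs0, hsp⟩ := hs
      have e1 : p + s ≠ 0 := by linarith
      have e2 : (1 - p) - s ≠ 0 := by nlinarith
      have e3 : p - s ≠ 0 := by linarith
      have e4 : (1 - p) + s ≠ 0 := by nlinarith
      have d1 : HasDerivAt (fun s : ℝ => G p (p + s))
          ((p + s)⁻¹ * p + (-(1 - p - s)⁻¹) * (1 - p)) s := by
        have a1 := (log_hasDerivAt_shift p s e1).mul_const p
        have a2 : HasDerivAt (fun s : ℝ => Real.log (1 - (p + s)))
            (-(1 - p - s)⁻¹) s := by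
          have := log_hasDerivAt_shift' (1 - p) s e2
          convert this using 2 <;> ring
        exact a1.add (a2.mul_const (1 - p))
      have d2 : HasDerivAt (fun s : ℝ => G p (p - s))
          ((-(p - s)⁻¹) * p + ((1 - p + s)⁻¹) * (1 - p)) s := by
        have a1 := (log_hasDerivAt_shift' p s e3).mul_const p
        have a2 : HasDerivAt (fun s : ℝ => Real.log (1 - (p - s)))
            ((1 - p + s)⁻¹) s := by
          have := log_hasDerivAt_shift (1 - p) s e4
          convert this using 2 <;> ring
        exact a1.add (a2.mul_const (1 - p))
      have dH : HasDerivAt H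
          (((p + s)⁻¹ * p + (-(1 - p - s)⁻¹) * (1 - p)) -
           ((-(p - s)⁻¹) * p + ((1 - p + s)⁻¹) * (1 - p))) s := d1.sub d2
      rw [dH.deriv]
      have hv : ((p + s)⁻¹ * p + (-(1 - p - s)⁻¹) * (1 - p)) -
           ((-(p - s)⁻¹) * p + ((1 - p + s)⁻¹) * (1 - p))
          = 2 * s^2 * (1 - 2*p) / ((p^2 - s^2) * ((1-p)^2 - s^2)) := by
        have q1 : (0:ℝ) < p^2 - s^2 := by nlinarith
        have q2 : (0:ℝ) < (1-p)^2 - s^2 := by nlinarith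
        rw [eq_div_iff (by positivity : ((p^2 - s^2) * ((1-p)^2 - s^2)) ≠ 0)]
        field_simp [e1, e2, e3, e4]
        ring
      rw [hv]
      have q1 : (0:ℝ) < p^2 - s^2 := by nlinarith
      have q2 : (0:ℝ) < (1-p)^2 - s^2 := by nlinarith
      have q3 : (0:ℝ) < 1 - 2*p := by linarith
      positivity
  have h0 : H 0 = 0 := by simp [hH]
  have := key (Set.mem_Ico.mpr ⟨le_refl 0, hp⟩) (Set.mem_Ico.mpr ⟨ht.le, htp⟩) ht
  rw [h0] at this
  simp only [hH] at this
  linarith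
lemma G_exp (p x : ℝ) (hx : 0 < x) (hx1 : x < 1) :
    x ^ p * (1 - x) ^ (1 - p) = Real.exp (G p x) := by
  rw [Real.rpow_def_of_pos hx, Real.rpow_def_of_pos (by linarith : (0:ℝ) < 1 - x),
    ← Real.exp_add]
  rfl

lemma key (p : ℝ) (r : ℝ → ℝ) (hp0 : 0 < p) (hp2 : p < 1/2)
    (hanti : StrictAntiOn r (Set.Icc 0 1))
    (hmaps : Set.MapsTo r (Set.Icc 0 1) (Set.Icc 0 1))
    (heq : ∀ x ∈ Set.Ioo (0 : ℝ) 1,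
      x ^ p * (1 - x) ^ (1 - p) = r x ^ p * (1 - r x) ^ (1 - p)) :
    ∀ x ∈ Set.Ioo (0 : ℝ) 1, 2 * p - x ≤ r x ∧ r x < 1 - x := by
  have hp1 : p < 1 := by linarith
  -- r maps the open interval to itself
  have hrmem : ∀ x ∈ Set.Ioo (0 : ℝ) 1, r x ∈ Set.Ioo (0 : ℝ) 1 := by
    intro x hx
    have h01 : r x ∈ Set.Icc (0:ℝ) 1 := hmaps (Set.Ioo_subset_Icc_self hx)
    have hpos : 0 < x ^ p * (1 - x) ^ (1 - p) :=
      mul_pos (Real.rpow_pos_of_pos hx.1 p)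
        (Real.rpow_pos_of_pos (by linarith [hx.2] : (0:ℝ) < 1 - x) (1 - p))
    constructor
    · rcases h01.1.lt_or_eq with h | h
      · exact h
      · exfalso
        have := heq x hx
        rw [← h, Real.zero_rpow hp0.ne', zero_mul] at this
        linarith
    · rcases h01.2.lt_or_eq with h | h
      · exact h
      · exfalso
        have := heq x hx
        rw [h, sub_self, Real.zero_rpow (by linarith : (1:ℝ) - p ≠ 0), mul_zero] at this
        linarith
  have geq : ∀ x ∈ Set.Ioo (0 : ℝ) 1, G p (r x) = G p x := by
    intro x hx
    have hr := hrmem x hx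
    have := heq x hx
    rw [G_exp p x hx.1 hx.2, G_exp p (r x) hr.1 hr.2] at this
    exact (Real.exp_eq_exp.mp this).symm
  -- r p = p
  have hpI : p ∈ Set.Ioo (0:ℝ) 1 := ⟨hp0, hp1⟩
  have hfix : r p = p := by
    have hg := geq p hpI
    have hrp := hrmem p hpI
    rcases lt_trichotomy (r p) p with h | h | h
    · exfalso
      have := G_mono p hp0 hp1 (Set.mem_Ioc.mpr ⟨hrp.1, h.le⟩)
        (Set.mem_Ioc.mpr ⟨hp0, le_refl p⟩) h
      linarith
    · exact h
    · exfalso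
      have := G_anti p hp0 hp1 (Set.mem_Ico.mpr ⟨le_refl p, hp1⟩)
        (Set.mem_Ico.mpr ⟨h.le, hrp.2⟩) h
      linarith
  intro x hx
  obtain ⟨hx0, hx1⟩ := hx
  have hrx := hrmem x ⟨hx0, hx1⟩
  have hg := geq x ⟨hx0, hx1⟩
  rcases lt_trichotomy x p with hxp | hxp | hxp
  · -- x < p : r x > p
    have hrp : p < r x := by
      have := hanti (Set.mem_Icc.mpr ⟨hx0.le, hx1.le⟩)
        (Set.mem_Icc.mpr ⟨hp0.le, hp1.le⟩) hxp
      rwa [hfix] at this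
    constructor
    · -- 2p - x ≤ r x
      have hsym := G_sym p hp0 hp2 (t := p - x) (by linarith) (by linarith)
      rw [show p - (p - x) = x by ring, show p + (p - x) = 2*p - x by ring] at hsym
      have hlt : 2*p - x < r x := by
        refine ((G_anti p hp0 hp1).lt_iff_gt ?_ ?_).mp ?_
        · exact Set.mem_Ico.mpr ⟨hrp.le, hrx.2⟩
        · exact Set.mem_Ico.mpr ⟨by linarith, by linarith⟩
        · rw [hg]; exact hsym
      linarith
    · -- r x < 1 - x
      have hlog : Real.log x < Real.log (1 - x) := Real.log_lt_log hx0 (by linarith)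
      have hgg : G p (1 - x) < G p x := by
        have e : G p x - G p (1 - x) = (Real.log (1-x) - Real.log x) * (1 - 2*p) := by
          unfold G
          rw [sub_sub_cancel]
          ring
        nlinarith [e]
      refine ((G_anti p hp0 hp1).lt_iff_gt ?_ ?_).mp ?_
      · exact Set.mem_Ico.mpr ⟨by linarith, by linarith⟩
      · exact Set.mem_Ico.mpr ⟨hrp.le, hrx.2⟩
      · rw [hg]; exact hgg
  · -- x = p
    subst hxp
    rw [hfix]
    constructor <;> linarith
  · -- p < x : r x < p
    have hrp : r x < p := by
      have := hanti (Set.mem_Icc.mpr ⟨hp0.le, hp1.le⟩)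
        (Set.mem_Icc.mpr ⟨hx0.le, hx1.le⟩) hxp
      rwa [hfix] at this
    constructor
    · rcases lt_or_ge x (2*p) with h2p | h2p
      · have hsym := G_sym p hp0 hp2 (t := x - p) (by linarith) (by linarith)
        rw [show p - (x - p) = 2*p - x by ring, show p + (x - p) = x by ring] at hsym
        have hlt : 2*p - x < r x := by
          refine ((G_mono p hp0 hp1).lt_iff_lt ?_ ?_).mp ?_
          · exact Set.mem_Ioc.mpr ⟨by linarith, by linarith⟩
          · exact Set.mem_Ioc.mpr ⟨hrx.1, hrp.le⟩
          · rw [hg]; exact hsym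
        linarith
      · linarith [hrx.1]
    · rcases lt_or_ge p (1 - x) with h1x | h1x
      · linarith
      · have hx12 : 1 - x < x := by linarith
        have hlog : Real.log (1 - x) < Real.log x := Real.log_lt_log (by linarith) hx12
        have hgg : G p x < G p (1 - x) := by
          have e : G p (1 - x) - G p x = (Real.log x - Real.log (1-x)) * (1 - 2*p) := by
            unfold G
            rw [sub_sub_cancel]
            ring
          nlinarith [e]
        refine ((G_mono p hp0 hp1).lt_iff_lt ?_ ?_).mp ?_
        · exact Set.mem_Ioc.mpr ⟨hrx.1, hrp.le⟩
        · exact Set.mem_Ioc.mpr ⟨by linarith, h1x⟩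
        · rw [hg]; exact hgg
lemma rmem (p : ℝ) (r : ℝ → ℝ) (hp0 : 0 < p) (hp1 : p < 1)
    (hmaps : Set.MapsTo r (Set.Icc 0 1) (Set.Icc 0 1))
    (heq : ∀ x ∈ Set.Ioo (0 : ℝ) 1,
      x ^ p * (1 - x) ^ (1 - p) = r x ^ p * (1 - r x) ^ (1 - p)) :
    ∀ x ∈ Set.Ioo (0 : ℝ) 1, r x ∈ Set.Ioo (0 : ℝ) 1 := by
  intro x hx
  have h01 : r x ∈ Set.Icc (0:ℝ) 1 := hmaps (Set.Ioo_subset_Icc_self hx)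
  have hpos : 0 < x ^ p * (1 - x) ^ (1 - p) :=
    mul_pos (Real.rpow_pos_of_pos hx.1 p)
      (Real.rpow_pos_of_pos (by linarith [hx.2] : (0:ℝ) < 1 - x) (1 - p))
  constructor
  · rcases h01.1.lt_or_eq with h | h
    · exact h
    · exfalso
      have := heq x hx
      rw [← h, Real.zero_rpow hp0.ne', zero_mul] at this
      linarith
  · rcases h01.2.lt_or_eq with h | h
    · exact h
    · exfalso
      have := heq x hx
      rw [h, sub_self, Real.zero_rpow (by linarith : (1:ℝ) - p ≠ 0), mul_zero] at this
      linarith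

lemma Geq (p : ℝ) (r : ℝ → ℝ) (hp0 : 0 < p) (hp1 : p < 1)
    (hmaps : Set.MapsTo r (Set.Icc 0 1) (Set.Icc 0 1))
    (heq : ∀ x ∈ Set.Ioo (0 : ℝ) 1,
      x ^ p * (1 - x) ^ (1 - p) = r x ^ p * (1 - r x) ^ (1 - p)) :
    ∀ x ∈ Set.Ioo (0 : ℝ) 1, G p (r x) = G p x := by
  intro x hx
  have hr := rmem p r hp0 hp1 hmaps heq x hx
  have := heq x hx
  rw [G_exp p x hx.1 hx.2, G_exp p (r x) hr.1 hr.2] at this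
  exact (Real.exp_eq_exp.mp this).symm

lemma rfix (p : ℝ) (r : ℝ → ℝ) (hp0 : 0 < p) (hp1 : p < 1)
    (hmaps : Set.MapsTo r (Set.Icc 0 1) (Set.Icc 0 1))
    (heq : ∀ x ∈ Set.Ioo (0 : ℝ) 1,
      x ^ p * (1 - x) ^ (1 - p) = r x ^ p * (1 - r x) ^ (1 - p)) :
    r p = p := by
  have hpI : p ∈ Set.Ioo (0:ℝ) 1 := ⟨hp0, hp1⟩
  have hg := Geq p r hp0 hp1 hmaps heq p hpI
  have hrp := rmem p r hp0 hp1 hmaps heq p hpI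
  rcases lt_trichotomy (r p) p with h | h | h
  · exfalso
    have := G_mono p hp0 hp1 (Set.mem_Ioc.mpr ⟨hrp.1, h.le⟩)
      (Set.mem_Ioc.mpr ⟨hp0, le_refl p⟩) h
    linarith
  · exact h
  · exfalso
    have := G_anti p hp0 hp1 (Set.mem_Ico.mpr ⟨le_refl p, hp1⟩)
      (Set.mem_Ico.mpr ⟨h.le, hrp.2⟩) h
    linarith

lemma half (r : ℝ → ℝ) (hanti : StrictAntiOn r (Set.Icc 0 1))
    (hmaps : Set.MapsTo r (Set.Icc 0 1) (Set.Icc 0 1))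
    (heq : ∀ x ∈ Set.Ioo (0 : ℝ) 1,
      x ^ (1/2 : ℝ) * (1 - x) ^ (1 - 1/2 : ℝ) = r x ^ (1/2 : ℝ) * (1 - r x) ^ (1 - 1/2 : ℝ)) :
    ∀ x ∈ Set.Icc (0 : ℝ) 1, r x = 1 - x := by
  have hp0 : (0:ℝ) < 1/2 := by norm_num
  have hp1 : (1/2:ℝ) < 1 := by norm_num
  have hfix : r (1/2) = 1/2 := rfix (1/2) r hp0 hp1 hmaps heq
  have hint : ∀ x ∈ Set.Ioo (0 : ℝ) 1, r x = 1 - x := by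
    intro x hx
    obtain ⟨hx0, hx1⟩ := hx
    have hrx := rmem (1/2) r hp0 hp1 hmaps heq x ⟨hx0, hx1⟩
    have hg := Geq (1/2) r hp0 hp1 hmaps heq x ⟨hx0, hx1⟩
    have hrefl : G (1/2) (1 - x) = G (1/2) x := by
      unfold G
      rw [sub_sub_cancel]
      ring
    rcases lt_trichotomy x (1/2 : ℝ) with hxp | hxp | hxp
    · have hrp : (1/2 : ℝ) < r x := by
        have := hanti (Set.mem_Icc.mpr ⟨hx0.le, hx1.le⟩)
          (Set.mem_Icc.mpr ⟨by norm_num, by norm_num⟩) hxp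
        rwa [hfix] at this
      exact (G_anti (1/2) hp0 hp1).injOn (Set.mem_Ico.mpr ⟨hrp.le, hrx.2⟩)
        (Set.mem_Ico.mpr ⟨by linarith, by linarith⟩) (by rw [hg, ← hrefl])
    · rw [← hxp] at hfix
      rw [hfix, hxp]
      norm_num
    · have hrp : r x < (1/2 : ℝ) := by
        have := hanti (Set.mem_Icc.mpr ⟨by norm_num, by norm_num⟩)
          (Set.mem_Icc.mpr ⟨hx0.le, hx1.le⟩) hxp
        rwa [hfix] at this
      exact (G_mono (1/2) hp0 hp1).injOn (Set.mem_Ioc.mpr ⟨hrx.1, hrp.le⟩)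
        (Set.mem_Ioc.mpr ⟨by linarith, by linarith⟩) (by rw [hg, ← hrefl])
  intro x hx
  rcases hx.1.lt_or_eq with h0 | h0
  · rcases hx.2.lt_or_eq with h1 | h1
    · exact hint x ⟨h0, h1⟩
    · subst h1
      have h01 : r 1 ∈ Set.Icc (0:ℝ) 1 := hmaps (Set.mem_Icc.mpr ⟨zero_le_one, le_refl 1⟩)
      have hle : r 1 ≤ 0 := by
        by_contra hcon
        push_neg at hcon
        have hy0 : (0:ℝ) < 1 - r 1 / 2 := by linarith [h01.2]
        have hy1 : 1 - r 1 / 2 < 1 := by linarith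
        have h2 : r 1 < r (1 - r 1 / 2) :=
          hanti (Set.mem_Icc.mpr ⟨hy0.le, hy1.le⟩)
            (Set.mem_Icc.mpr ⟨zero_le_one, le_refl 1⟩) hy1
        rw [hint (1 - r 1 / 2) ⟨hy0, hy1⟩] at h2
        linarith
      have := h01.1
      have : r 1 = 0 := le_antisymm hle this
      rw [this]; norm_num
  · rw [← h0]
    have h01 : r 0 ∈ Set.Icc (0:ℝ) 1 := hmaps (Set.mem_Icc.mpr ⟨le_refl 0, zero_le_one⟩)
    have hge : 1 ≤ r 0 := by
      by_contra hcon
      push_neg at hcon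
      have hy0 : (0:ℝ) < (1 - r 0) / 2 := by linarith
      have hy1 : (1 - r 0) / 2 < 1 := by linarith [h01.1]
      have h2 : r ((1 - r 0) / 2) < r 0 :=
        hanti (Set.mem_Icc.mpr ⟨le_refl 0, zero_le_one⟩)
          (Set.mem_Icc.mpr ⟨hy0.le, hy1.le⟩) hy0
      rw [hint ((1 - r 0) / 2) ⟨hy0, hy1⟩] at h2
      linarith
    have : r 0 = 1 := le_antisymm h01.2 hge
    rw [this]; norm_num

/-- Let `p ∈ (0,1)` and let `r_p : [0,1] → [0,1]` be the (unique) continuous strictly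
decreasing function with `x^p (1-x)^{1-p} = r_p(x)^p (1-r_p(x))^{1-p}` on `(0,1)`.
If `p < 1/2` then `2p - x ≤ r_p(x) < 1 - x` on `(0,1)`; if `p > 1/2` the inequalities
are reversed; and if `p = 1/2` then `r_p(x) = 1 - x` on `[0,1]`. -/
theorem stmt16 (p : ℝ) (hp : p ∈ Set.Ioo (0 : ℝ) 1) (r : ℝ → ℝ)
    (hcont : ContinuousOn r (Set.Icc 0 1)) (hanti : StrictAntiOn r (Set.Icc 0 1))
    (hmaps : Set.MapsTo r (Set.Icc 0 1) (Set.Icc 0 1))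
    (heq : ∀ x ∈ Set.Ioo (0 : ℝ) 1,
      x ^ p * (1 - x) ^ (1 - p) = r x ^ p * (1 - r x) ^ (1 - p)) :
    (p < 1 / 2 → ∀ x ∈ Set.Ioo (0 : ℝ) 1, 2 * p - x ≤ r x ∧ r x < 1 - x) ∧
    (1 / 2 < p → ∀ x ∈ Set.Ioo (0 : ℝ) 1, r x ≤ 2 * p - x ∧ 1 - x < r x) ∧
    (p = 1 / 2 → ∀ x ∈ Set.Icc (0 : ℝ) 1, r x = 1 - x) := by
  obtain ⟨hp0, hp1⟩ := hp
  refine ⟨fun hp2 => key p r hp0 hp2 hanti hmaps heq, fun hp2 x hx => ?_, fun hp2 => ?_⟩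
  · -- p > 1/2 : reflect
    set r' : ℝ → ℝ := fun y => 1 - r (1 - y) with hr'
    have hanti' : StrictAntiOn r' (Set.Icc 0 1) := by
      intro a ha b hb hab
      have h1 : (1:ℝ) - b ∈ Set.Icc (0:ℝ) 1 := ⟨by linarith [hb.2], by linarith [hb.1]⟩
      have h2 : (1:ℝ) - a ∈ Set.Icc (0:ℝ) 1 := ⟨by linarith [ha.2], by linarith [ha.1]⟩
      have := hanti h1 h2 (by linarith)
      simp only [hr']
      linarith
    have hmaps' : Set.MapsTo r' (Set.Icc 0 1) (Set.Icc 0 1) := by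
      intro a ha
      have := hmaps (⟨by linarith [ha.2], by linarith [ha.1]⟩ : (1:ℝ) - a ∈ Set.Icc 0 1)
      exact ⟨by simp only [hr']; linarith [this.2], by simp only [hr']; linarith [this.1]⟩
    have heq' : ∀ y ∈ Set.Ioo (0 : ℝ) 1,
        y ^ (1-p) * (1 - y) ^ (1 - (1-p)) = r' y ^ (1-p) * (1 - r' y) ^ (1 - (1-p)) := by
      intro y hy
      have h := heq (1 - y) ⟨by linarith [hy.2], by linarith [hy.1]⟩
      rw [show (1:ℝ) - (1 - y) = y by ring] at h
      simp only [hr']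
      rw [show (1:ℝ) - (1 - r (1 - y)) = r (1 - y) by ring,
        show (1:ℝ) - (1 - p) = p by ring]
      linear_combination h
    have hxm : (1:ℝ) - x ∈ Set.Ioo (0:ℝ) 1 := ⟨by linarith [hx.2], by linarith [hx.1]⟩
    have := key (1-p) r' (by linarith) (by linarith) hanti' hmaps' heq' (1 - x) hxm
    obtain ⟨h1, h2⟩ := this
    simp only [hr'] at h1 h2
    rw [show (1:ℝ) - (1 - x) = x by ring] at h1 h2
    constructor <;> linarith
  · subst hp2
    exact half r hanti hmaps heq
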